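/- There is no finite time-abstract language equivalence for event-clock automata: any equivalence relation ≈ on valuations of event clocks over the alphabet {a,b} such that v1 ≈ v2 implies Untime(L(A,(q,v1))) = Untime(L(A,(q,v2))) for every event-clock automaton A and location q has infinitely many equivalence classes. -/
import Mathlib


/-- Event clocks over alphabet `α`: a history clock and a prophecy clock per letter. -/
inductive Clock (α : Type) where
  | hist (a : α)
  | proph (a : α)
deriving DecidableEq

/-- A valuation assigns to each event clock a real value or `⊥` (here `none`). -/
def Val (α : Type) := Clock α → Option ℝ

/-- All defined clock values are nonnegative. -/
def Nonneg {α : Type} (v : Val α) : Prop := ∀ x r, v x = some r → 0 ≤ r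

/-- `v[x := d]`. -/
def Val.set {α : Type} [DecidableEq α] (v : Val α) (x : Clock α) (d : Option ℝ) : Val α :=
  fun y => if y = x then d else v y

/-- Time elapse: history clocks increase, prophecy clocks decrease; `⊥` unaffected. -/
def elapse {α : Type} (v : Val α) (t : ℝ) : Val α := fun c =>
  match c with
  | .hist a => (v (.hist a)).map (· + t)
  | .proph a => (v (.proph a)).map (· - t)

/-- Time elapse by `t` is allowed: `t ≥ 0` and all prophecy clocks are at least `t`. -/
def CanElapse {α : Type} (v : Val α) (t : ℝ) : Prop :=
  0 ≤ t ∧ ∀ a r, v (.proph a) = some r → t ≤ r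

def InitialVal {α : Type} (v : Val α) : Prop := ∀ a, v (.hist a) = none

def FinalVal {α : Type} (v : Val α) : Prop := ∀ a, v (.proph a) = none

/-- Clock constraints: Boolean combinations of atomic constraints `x ∼ c`. -/
inductive Constr (α : Type) where
  | tt
  | lt (x : Clock α) (c : ℕ)
  | gt (x : Clock α) (c : ℕ)
  | eq (x : Clock α) (c : ℕ)
  | not (ψ : Constr α)
  | and (ψ₁ ψ₂ : Constr α)

def Constr.sat {α : Type} (v : Val α) : Constr α → Prop
  | .tt => True
  | .lt x c => ∃ r, v x = some r ∧ r < (c : ℝ)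
  | .gt x c => ∃ r, v x = some r ∧ (c : ℝ) < r
  | .eq x c => v x = some (c : ℝ)
  | .not ψ => ¬ Constr.sat v ψ
  | .and ψ₁ ψ₂ => Constr.sat v ψ₁ ∧ Constr.sat v ψ₂

/-- An event-clock automaton. -/
structure ECTA (α Q : Type) where
  init : Q
  edges : Set (Q × α × Constr α × Q)
  accept : Set Q

/-- Discrete step on letter `σ`: there is a nonnegative valuation `v̄` with
`v̄[→σ := 0] = v`, `v̄[←σ := 0] = v'` and `v̄ ⊨ ψ` for some edge `(q,σ,ψ,q')`. -/
def DStep {α Q : Type} [DecidableEq α] (A : ECTA α Q) (q : Q) (v : Val α) (σ : α)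
    (q' : Q) (v' : Val α) : Prop :=
  ∃ ψ, (q, σ, ψ, q') ∈ A.edges ∧
    ∃ vb : Val α, Nonneg vb ∧
      vb.set (.proph σ) (some 0) = v ∧
      vb.set (.hist σ) (some 0) = v' ∧
      Constr.sat vb ψ

/-- Combined step: elapse `t`, then fire a `σ`-edge. -/
def TStep {α Q : Type} [DecidableEq α] (A : ECTA α Q) (q : Q) (v : Val α) (t : ℝ) (σ : α)
    (q' : Q) (v' : Val α) : Prop :=
  CanElapse v t ∧ DStep A q (elapse v t) σ q' v'

/-- Acceptance of a timed word (given by successive delays) from state `(q,v)`. -/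
inductive ECAcc {α Q : Type} [DecidableEq α] (A : ECTA α Q) : Q → Val α → List (ℝ × α) → Prop where
  | nil : ∀ q v, q ∈ A.accept → FinalVal v → ECAcc A q v []
  | cons : ∀ q v t σ q' v' w, TStep A q v t σ q' v' → ECAcc A q' v' w → ECAcc A q v ((t, σ) :: w)

/-- `Untime(L(A,(q,v)))`. -/
def UntimedLangFrom {α Q : Type} [DecidableEq α] (A : ECTA α Q) (q : Q) (v : Val α) :
    Set (List α) :=
  { w | ∃ θ : List (ℝ × α), ECAcc A q v θ ∧ θ.map Prod.snd = w }

/-- The timed language of `A` (initialized runs). -/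
def TLang {α Q : Type} [DecidableEq α] (A : ECTA α Q) : Set (List (ℝ × α)) :=
  { θ | ∃ v, Nonneg v ∧ InitialVal v ∧ ECAcc A A.init v θ }

/-- `Untime(L(A))`. -/
def UntimedLang {α Q : Type} [DecidableEq α] (A : ECTA α Q) : Set (List α) :=
  { w | ∃ v, Nonneg v ∧ InitialVal v ∧ w ∈ UntimedLangFrom A A.init v }


/-- Valuation with prophecy clock of letter 0 equal to `n` and of letter 1 equal to `0`. -/
def myVal (n : ℕ) : Val (Fin 2) := fun c =>
  match c with
  | .hist _ => none
  | .proph a => if a = 0 then some (n : ℝ) else some 0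

/-- Automaton accepting `[1,0]` from `myVal m` iff `m = n`. -/
def myECTA (n : ℕ) : ECTA (Fin 2) (Fin 3) where
  init := 0
  edges := {((0 : Fin 3), (1 : Fin 2), Constr.eq (.proph 0) n, (1 : Fin 3)),
            ((1 : Fin 3), (0 : Fin 2), Constr.tt, (2 : Fin 3))}
  accept := {2}

lemma mem_myLang (n : ℕ) : [1, 0] ∈ UntimedLangFrom (myECTA n) 0 (myVal n) := by
  classical
  set vb1 : Val (Fin 2) := fun c =>
    match c with
    | .proph a => if a = 0 then some (n : ℝ) else none
    | .hist _ => none with hvb1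
  set v1 : Val (Fin 2) := vb1.set (.hist 1) (some 0) with hv1
  set vb2 : Val (Fin 2) := fun c =>
    match c with
    | .hist a => if a = 1 then some (n : ℝ) else none
    | .proph _ => none with hvb2
  refine ⟨[((0 : ℝ), 1), ((n : ℝ), 0)], ?_, rfl⟩
  refine ECAcc.cons _ _ 0 1 1 v1 _ ?_ ?_
  · refine ⟨⟨le_refl 0, ?_⟩, Constr.eq (.proph 0) n, ?_, vb1, ?_, ?_, rfl, ?_⟩
    · intro a r hr
      fin_cases a <;> simp [myVal] at hr <;>
        linarith [Nat.cast_nonneg (α := ℝ) n]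
    · simp [myECTA]
    · intro x r hr
      cases x with
      | hist a => simp [vb1] at hr
      | proph a =>
        by_cases ha : a = 0
        · simp [vb1, ha] at hr; simp [← hr]
        · simp [vb1, ha] at hr
    · funext c
      cases c with
      | hist a => simp [Val.set, elapse, myVal, vb1]
      | proph a =>
        by_cases ha : a = 0
        · subst ha; simp [Val.set, elapse, myVal, vb1]
        · have : a = 1 := by omega
          subst this; simp [Val.set, elapse, myVal, vb1]
    · simp [Constr.sat, vb1]
  · refine ECAcc.cons _ _ (n : ℝ) 0 2 (vb2.set (.hist 0) (some 0)) _ ?_ ?_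
    · refine ⟨⟨Nat.cast_nonneg n, ?_⟩, Constr.tt, ?_, vb2, ?_, ?_, rfl, trivial⟩
      · intro a r hr
        by_cases ha : a = 0
        · subst ha
          simp [v1, Val.set, vb1] at hr
          simp [← hr]
        · have : a = 1 := by omega
          subst this
          simp [v1, Val.set, vb1] at hr
      · simp [myECTA]
      · intro x r hr
        cases x with
        | hist a =>
          by_cases ha : a = 1
          · simp [vb2, ha] at hr; simp [← hr]
          · simp [vb2, ha] at hr
        | proph a => simp [vb2] at hr
      · funext c
        cases c with
        | hist a =>
          by_cases ha : a = 1
          · subst ha; simp [Val.set, elapse, v1, vb1, vb2]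
          · have : a = 0 := by omega
            subst this; simp [Val.set, elapse, v1, vb1, vb2]
        | proph a =>
          by_cases ha : a = 0
          · subst ha; simp [Val.set, elapse, v1, vb1, vb2]
          · have : a = 1 := by omega
            subst this; simp [Val.set, elapse, v1, vb1, vb2]
    · refine ECAcc.nil _ _ rfl ?_
      intro a
      simp [Val.set, vb2]

lemma myLang_inj {n m : ℕ} (hm : [1, 0] ∈ UntimedLangFrom (myECTA n) 0 (myVal m)) :
    n = m := by
  classical
  obtain ⟨θ, hacc, hmap⟩ := hm
  cases hacc with
  | nil => simp at hmap
  | cons q v t σ q' v' w hstep hrest =>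
    have hσ : σ = 1 := by
      simpa using congrArg (fun l => l.headI) hmap
    subst hσ
    obtain ⟨hce, ψ, hedge, vb, hnn, hset1, hset2, hsat⟩ := hstep
    have hψ : ψ = Constr.eq (.proph 0) n := by
      simp only [myECTA, Set.mem_insert_iff, Set.mem_singleton_iff, Prod.mk.injEq] at hedge
      rcases hedge with ⟨-, -, hψ, -⟩ | ⟨h0, -⟩
      · exact hψ
      · exact absurd h0 (by decide)
    subst hψ
    have ht : t = 0 := by
      have := congrFun hset1 (.proph 1)
      simp [Val.set, elapse, myVal] at this
      linarith
    have hvb0 : vb (.proph 0) = some ((m : ℝ) - t) := by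
      have := congrFun hset1 (.proph 0)
      simpa [Val.set, elapse, myVal] using this
    have : some ((m : ℝ) - t) = some (n : ℝ) := by
      rw [← hvb0]; exact hsat
    rw [ht] at this
    have : (m : ℝ) = (n : ℝ) := by
      have h' := Option.some.injEq _ _ ▸ this
      linarith [h']
    exact_mod_cast this.symm

/-- There is no finite time-abstract language equivalence for event-clock automata:
any equivalence relation on valuations of event clocks over `{a,b}` such that related
valuations have the same untimed language from every location of every ECTA has
infinitely many equivalence classes. -/
theorem no_finite_time_abstract_language_equivalence
    (s : Setoid (Val (Fin 2)))
    (h : ∀ (Q : Type) (A : ECTA (Fin 2) Q) (q : Q) (v₁ v₂ : Val (Fin 2)),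
        s.r v₁ v₂ → UntimedLangFrom A q v₁ = UntimedLangFrom A q v₂) :
    Infinite (Quotient s) := by
  have inj : Function.Injective (fun n : ℕ => Quotient.mk s (myVal n)) := by
    intro n m hq
    have hr : s.r (myVal n) (myVal m) := Quotient.exact hq
    have heq := h (Fin 3) (myECTA n) 0 (myVal n) (myVal m) hr
    have := mem_myLang n
    rw [heq] at this
    exact myLang_inj this
  exact Infinite.of_injective _ inj
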